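/- Fix θ > 0. If f, g ∈ F[0,T] satisfy Φ_θ(f) = Φ_θ(g), then Φ_θ(λf + (1−λ)g) = Φ_θ(f) for every λ ∈ [0,1]; that is, the equivalence classes of the relation f ∼_θ g ⇔ Φ_θ(f) = Φ_θ(g) are convex subsets of F[0,T]. -/

import Mathlib

open Set Function Filter Classical

/-- The next SOD sampling time after time `s` for input `f`, threshold `θ`, on `[0,T]`:
the infimum of `{t ∈ (s,T] : |f t - f s| ≥ θ}` if this set is nonempty, `none` otherwise. -/
noncomputable def sodNext (T θ : ℝ) (f : ℝ → ℝ) (s : ℝ) : Option ℝ :=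
  if (∃ t ∈ Set.Ioc s T, θ ≤ |f t - f s|) then
    some (sInf {t | t ∈ Set.Ioc s T ∧ θ ≤ |f t - f s|})
  else none

/-- The `k`-th SOD sampling time (`t_0 = 0`), `none` if the recursion has stopped before `k`. -/
noncomputable def sodTime (T θ : ℝ) (f : ℝ → ℝ) : ℕ → Option ℝ
  | 0 => some 0
  | n + 1 => (sodTime T θ f n).bind (sodNext T θ f)

/-- The SOD output event sequence `Φ_θ(f)` : it takes the value `f t_k - f t_{k-1}` at
each sampling time `t_k`, `k ≥ 1`, and `0` elsewhere. -/
noncomputable def sodOut (T θ : ℝ) (f : ℝ → ℝ) : ℝ → ℝ := fun t =>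
  if h : ∃ k : ℕ, ∃ s : ℝ, sodTime T θ f k = some s ∧ sodNext T θ f s = some t
  then f t - f h.choose_spec.choose
  else 0

/-- Membership in `F[0,T]`: continuous on `[0,T]` with `f 0 = 0`. -/
def memF (T : ℝ) (f : ℝ → ℝ) : Prop :=
  ContinuousOn f (Set.Icc 0 T) ∧ f 0 = 0

/-- An event sequence on `[0,T]`: finitely supported with support in `[0,T]`. -/
def IsEventSeq (T : ℝ) (η : ℝ → ℝ) : Prop :=
  (Function.support η).Finite ∧ Function.support η ⊆ Set.Icc 0 T

/-- `η` is `±1`-valued on its support. -/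
def IsPM (η : ℝ → ℝ) : Prop :=
  ∀ t ∈ Function.support η, η t = 1 ∨ η t = -1

/-- Weyl's discrepancy norm `‖η‖_D = sup_{0 ≤ a ≤ b ≤ T} |Σ_{t ∈ [a,b]} η t|`. -/
noncomputable def discNorm (T : ℝ) (η : ℝ → ℝ) : ℝ :=
  sSup {x | ∃ a b : ℝ, 0 ≤ a ∧ a ≤ b ∧ b ≤ T ∧ x = |∑ᶠ t ∈ Set.Icc a b, η t|}

/-- Alexiewicz norm `‖η‖_A = sup_{a ∈ [0,T]} |Σ_{t ∈ [0,a]} η t|`. -/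
noncomputable def alexNorm (T : ℝ) (η : ℝ → ℝ) : ℝ :=
  sSup {x | ∃ a : ℝ, 0 ≤ a ∧ a ≤ T ∧ x = |∑ᶠ t ∈ Set.Icc 0 a, η t|}

/-- The values of `η` at consecutive support points alternate in sign. -/
def Alternating (η : ℝ → ℝ) : Prop :=
  ∀ s u : ℝ, s ∈ Function.support η → u ∈ Function.support η → s < u →
    (∀ t ∈ Function.support η, ¬ (s < t ∧ t < u)) → η s * η u < 0

/-- One `(+−)`-transcription step: erase a `+1` followed (with no support in between) by a `−1`. -/
def StepPM (η η' : ℝ → ℝ) : Prop :=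
  ∃ s u : ℝ, s < u ∧ η s = 1 ∧ η u = -1 ∧ (∀ t : ℝ, s < t → t < u → η t = 0) ∧
    η' = Function.update (Function.update η s 0) u 0

/-- One `(−+)`-transcription step: erase a `−1` followed (with no support in between) by a `+1`. -/
def StepMP (η η' : ℝ → ℝ) : Prop :=
  ∃ s u : ℝ, s < u ∧ η s = -1 ∧ η u = 1 ∧ (∀ t : ℝ, s < t → t < u → η t = 0) ∧
    η' = Function.update (Function.update η s 0) u 0

/-- `StepsN R n x y` : `y` is obtained from `x` by `n` successive `R`-steps. -/
def StepsN (R : (ℝ → ℝ) → (ℝ → ℝ) → Prop) : ℕ → (ℝ → ℝ) → (ℝ → ℝ) → Prop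
  | 0, x, y => x = y
  | n + 1, x, z => ∃ y, R x y ∧ StepsN R n y z

/-- Uniform distance `‖f − g‖_∞` over `[0,T]`. -/
noncomputable def unifDist (T : ℝ) (f g : ℝ → ℝ) : ℝ :=
  sSup {x | ∃ t ∈ Set.Icc 0 T, x = |f t - g t|}

section Aux

variable {T θ : ℝ}

lemma crossing_sInf_mem (hθ : 0 < θ) {f : ℝ → ℝ} (hf : ContinuousOn f (Set.Icc 0 T))
    {s : ℝ} (hs : 0 ≤ s)
    (hne : ∃ t ∈ Set.Ioc s T, θ ≤ |f t - f s|) :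
    sInf {t | t ∈ Set.Ioc s T ∧ θ ≤ |f t - f s|} ∈ {t | t ∈ Set.Ioc s T ∧ θ ≤ |f t - f s|} := by
  set S := {t | t ∈ Set.Ioc s T ∧ θ ≤ |f t - f s|} with hS
  have hne' : S.Nonempty := by
    obtain ⟨t, ht, h2⟩ := hne; exact ⟨t, ht, h2⟩
  have hsub : Set.Icc s T ⊆ Set.Icc 0 T := Set.Icc_subset_Icc hs le_rfl
  have hcont : ContinuousOn (fun u => |f u - f s|) (Set.Icc s T) :=
    ((hf.mono hsub).sub continuousOn_const).abs
  have hclosed : IsClosed (Set.Icc s T ∩ (fun u => |f u - f s|) ⁻¹' Set.Ici θ) :=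
    hcont.preimage_isClosed_of_isClosed isClosed_Icc isClosed_Ici
  have hSeq : S = Set.Icc s T ∩ (fun u => |f u - f s|) ⁻¹' Set.Ici θ := by
    ext u
    simp only [hS, Set.mem_setOf_eq, Set.mem_Ioc, Set.mem_Icc, Set.mem_inter_iff,
      Set.mem_preimage, Set.mem_Ici]
    constructor
    · rintro ⟨⟨h1, h2⟩, h3⟩; exact ⟨⟨le_of_lt h1, h2⟩, h3⟩
    · rintro ⟨⟨h1, h2⟩, h3⟩
      refine ⟨⟨lt_of_le_of_ne h1 ?_, h2⟩, h3⟩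
      rintro rfl
      simp at h3; linarith
  rw [hSeq]
  refine hclosed.csInf_mem ?_ ?_
  · rw [← hSeq]; exact hne'
  · exact BddBelow.mono Set.inter_subset_left bddBelow_Icc

lemma sodNext_some_iff (hθ : 0 < θ) {f : ℝ → ℝ} (hf : ContinuousOn f (Set.Icc 0 T))
    {s t : ℝ} (hs : 0 ≤ s) :
    sodNext T θ f s = some t ↔
      (t ∈ Set.Ioc s T ∧ θ ≤ |f t - f s| ∧ ∀ u ∈ Set.Ioc s T, θ ≤ |f u - f s| → t ≤ u) := by
  constructor
  · intro h
    rw [sodNext] at h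
    split_ifs at h with hex
    · have hmem := crossing_sInf_mem hθ hf hs hex
      have ht : sInf {t | t ∈ Set.Ioc s T ∧ θ ≤ |f t - f s|} = t := Option.some.inj h
      rw [ht] at hmem
      refine ⟨hmem.1, hmem.2, fun u hu h2 => ?_⟩
      rw [← ht]
      exact csInf_le ⟨s, fun x hx => le_of_lt hx.1.1⟩ ⟨hu, h2⟩
  · rintro ⟨h1, h2, h3⟩
    have hex : ∃ u ∈ Set.Ioc s T, θ ≤ |f u - f s| := ⟨t, h1, h2⟩
    rw [sodNext, if_pos hex]
    have hmem := crossing_sInf_mem hθ hf hs hex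
    have : sInf {t | t ∈ Set.Ioc s T ∧ θ ≤ |f t - f s|} = t :=
      le_antisymm (csInf_le ⟨s, fun x hx => le_of_lt hx.1.1⟩ ⟨h1, h2⟩) (h3 _ hmem.1 hmem.2)
    rw [this]

lemma sodNext_none_iff {f : ℝ → ℝ} {s : ℝ} :
    sodNext T θ f s = none ↔ ∀ t ∈ Set.Ioc s T, |f t - f s| < θ := by
  constructor
  · intro h t ht
    by_contra hc
    rw [sodNext, if_pos ⟨t, ht, not_lt.1 hc⟩] at h
    exact nomatch h
  · intro h
    rw [sodNext, if_neg]
    push_neg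
    exact h

lemma sodTime_succ {f : ℝ → ℝ} {k : ℕ} {t : ℝ} :
    sodTime T θ f (k+1) = some t ↔
      ∃ s, sodTime T θ f k = some s ∧ sodNext T θ f s = some t := by
  simp [sodTime, Option.bind_eq_some_iff]

lemma sodTime_mem (hT : 0 ≤ T) (hθ : 0 < θ) {f : ℝ → ℝ}
    (hf : ContinuousOn f (Set.Icc 0 T)) :
    ∀ k s, sodTime T θ f k = some s → s ∈ Set.Icc 0 T := by
  intro k
  induction k with
  | zero =>
    intro s h
    simp only [sodTime, Option.some.injEq] at h
    subst h
    exact ⟨le_rfl, hT⟩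
  | succ n ih =>
    intro s h
    obtain ⟨u, hu, hnext⟩ := (sodTime_succ).1 h
    have hmu := ih u hu
    have h2 := ((sodNext_some_iff hθ hf hmu.1).1 hnext).1
    exact ⟨le_trans hmu.1 (le_of_lt h2.1), h2.2⟩

lemma sodTime_mono (hT : 0 ≤ T) (hθ : 0 < θ) {f : ℝ → ℝ}
    (hf : ContinuousOn f (Set.Icc 0 T)) :
    ∀ (n j : ℕ) (u : ℝ), sodTime T θ f (j + n) = some u →
      ∃ s, sodTime T θ f j = some s ∧ s ≤ u ∧ (0 < n → s < u) := by
  intro n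
  induction n with
  | zero => intro j u h; exact ⟨u, h, le_rfl, by omega⟩
  | succ m ih =>
    intro j u h
    have h' : sodTime T θ f ((j+1) + m) = some u := by
      rw [show (j+1)+m = j+(m+1) by omega]; exact h
    obtain ⟨s, hs, hsu, _⟩ := ih (j+1) u h'
    obtain ⟨p, hp, hnext⟩ := sodTime_succ.1 hs
    have hmp := sodTime_mem hT hθ hf j p hp
    have hps := ((sodNext_some_iff hθ hf hmp.1).1 hnext).1.1
    exact ⟨p, hp, le_of_lt (lt_of_lt_of_le hps hsu), fun _ => lt_of_lt_of_le hps hsu⟩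

lemma sodTime_le (hT : 0 ≤ T) (hθ : 0 < θ) {f : ℝ → ℝ}
    (hf : ContinuousOn f (Set.Icc 0 T)) {j k : ℕ} {s u : ℝ} (hjk : j ≤ k)
    (hj : sodTime T θ f j = some s) (hk : sodTime T θ f k = some u) :
    s ≤ u ∧ (j < k → s < u) := by
  obtain ⟨n, rfl⟩ := Nat.exists_eq_add_of_le hjk
  obtain ⟨p, hp, hpu, hstrict⟩ := sodTime_mono hT hθ hf n j u hk
  rw [hj] at hp
  have hps := Option.some.inj hp
  subst hps
  exact ⟨hpu, fun h => hstrict (by omega)⟩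

lemma pred_unique (hT : 0 ≤ T) (hθ : 0 < θ) {f : ℝ → ℝ}
    (hf : ContinuousOn f (Set.Icc 0 T)) {k k' : ℕ} {s s' t : ℝ}
    (hk : sodTime T θ f k = some s) (hn : sodNext T θ f s = some t)
    (hk' : sodTime T θ f k' = some s') (hn' : sodNext T θ f s' = some t) :
    s = s' := by
  have hms := sodTime_mem hT hθ hf k s hk
  have hms' := sodTime_mem hT hθ hf k' s' hk'
  have hst : s < t := (((sodNext_some_iff hθ hf hms.1).1 hn).1).1
  have hst' : s' < t := (((sodNext_some_iff hθ hf hms'.1).1 hn').1).1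
  have hsucc : sodTime T θ f (k+1) = some t := sodTime_succ.2 ⟨s, hk, hn⟩
  have hsucc' : sodTime T θ f (k'+1) = some t := sodTime_succ.2 ⟨s', hk', hn'⟩
  have h1 : ¬ k < k' := by
    intro hlt
    have := (sodTime_le hT hθ hf (by omega : k+1 ≤ k') hsucc hk').1
    linarith
  have h2 : ¬ k' < k := by
    intro hlt
    have := (sodTime_le hT hθ hf (by omega : k'+1 ≤ k) hsucc' hk).1
    linarith
  have : k = k' := by omega
  subst this
  rw [hk] at hk'
  exact Option.some.inj hk'

lemma sodOut_eq (hT : 0 ≤ T) (hθ : 0 < θ) {f : ℝ → ℝ}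
    (hf : ContinuousOn f (Set.Icc 0 T)) {k : ℕ} {s t : ℝ}
    (hk : sodTime T θ f k = some s) (hn : sodNext T θ f s = some t) :
    sodOut T θ f t = f t - f s := by
  have hex : ∃ k : ℕ, ∃ s : ℝ, sodTime T θ f k = some s ∧ sodNext T θ f s = some t :=
    ⟨k, s, hk, hn⟩
  have h1 : sodOut T θ f t = f t - f hex.choose_spec.choose := by
    simp only [sodOut]
    exact dif_pos hex
  have hspec := hex.choose_spec.choose_spec
  have h2 : hex.choose_spec.choose = s := pred_unique hT hθ hf hspec.1 hspec.2 hk hn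
  rw [h1, h2]

lemma sodOut_ne (hT : 0 ≤ T) (hθ : 0 < θ) {f : ℝ → ℝ}
    (hf : ContinuousOn f (Set.Icc 0 T)) {k : ℕ} {s t : ℝ}
    (hk : sodTime T θ f k = some s) (hn : sodNext T θ f s = some t) :
    sodOut T θ f t ≠ 0 := by
  rw [sodOut_eq hT hθ hf hk hn]
  have hms := sodTime_mem hT hθ hf k s hk
  have habs := ((sodNext_some_iff hθ hf hms.1).1 hn).2.1
  intro h0
  rw [h0, abs_zero] at habs
  linarith

lemma exists_of_sodOut_ne {f : ℝ → ℝ} {t : ℝ} (h : sodOut T θ f t ≠ 0) :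
    ∃ k s, sodTime T θ f k = some s ∧ sodNext T θ f s = some t := by
  by_contra hc
  exact h (by simp only [sodOut]; rw [dif_neg hc])

end Aux

section Main

variable {T θ : ℝ}

/-- If `f` and `g` have the same SOD output and agree at the common sampling time `s`
(reached at the same index `k`), then the next sampling time of `g` after `s` is that of `f`. -/
lemma next_eq_of_out_eq (hT : 0 ≤ T) (hθ : 0 < θ) {f g : ℝ → ℝ}
    (hf : ContinuousOn f (Set.Icc 0 T)) (hg : ContinuousOn g (Set.Icc 0 T))
    (h : sodOut T θ f = sodOut T θ g) {k : ℕ} {s t : ℝ}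
    (hkf : sodTime T θ f k = some s) (hkg : sodTime T θ g k = some s)
    (hn : sodNext T θ f s = some t) :
    sodNext T θ g s = some t := by
  have hms : s ∈ Set.Icc 0 T := sodTime_mem hT hθ hf k s hkf
  have hst : s < t := (((sodNext_some_iff hθ hf hms.1).1 hn).1).1
  have hne : sodOut T θ g t ≠ 0 := by
    rw [← h]; exact sodOut_ne hT hθ hf hkf hn
  obtain ⟨j, s', hj, hn'⟩ := exists_of_sodOut_ne hne
  have hms' : s' ∈ Set.Icc 0 T := sodTime_mem hT hθ hg j s' hj
  have hst' : s' < t := (((sodNext_some_iff hθ hg hms'.1).1 hn').1).1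
  -- claim s = s'
  have h1 : ¬ s' < s := by
    intro hlt
    have hjk : j < k := by
      by_contra hc
      have := (sodTime_le hT hθ hg (not_lt.1 hc) hkg hj).1
      linarith
    have hsucc : sodTime T θ g (j+1) = some t := sodTime_succ.2 ⟨s', hj, hn'⟩
    have := (sodTime_le hT hθ hg (by omega : j+1 ≤ k) hsucc hkg).1
    linarith
  have h2 : ¬ s < s' := by
    intro hlt
    have hkj : k < j := by
      by_contra hc
      have := (sodTime_le hT hθ hg (not_lt.1 hc) hj hkg).1
      linarith
    -- get the (k+1)-st sampling time u of g, with u ≤ s' < t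
    obtain ⟨n, rfl⟩ := Nat.exists_eq_add_of_le (by omega : k + 1 ≤ j)
    obtain ⟨u, hu, hus', _⟩ := sodTime_mono hT hθ hg n (k+1) s' hj
    obtain ⟨p, hp, hpnext⟩ := sodTime_succ.1 hu
    rw [hkg] at hp
    have := Option.some.inj hp
    subst this
    -- u is a crossing for g after s, so in support of sodOut g, hence of sodOut f
    have hnu : sodOut T θ f u ≠ 0 := by
      rw [h]; exact sodOut_ne hT hθ hg hkg hpnext
    obtain ⟨i, p', hi, hin⟩ := exists_of_sodOut_ne hnu
    have hsucc_i : sodTime T θ f (i+1) = some u := sodTime_succ.2 ⟨p', hi, hin⟩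
    have hsu : s < u := (((sodNext_some_iff hθ hg hms.1).1 hpnext).1).1
    have hki : k < i + 1 := by
      by_contra hc
      have := (sodTime_le hT hθ hf (not_lt.1 hc) hsucc_i hkf).1
      linarith
    have hsucc_f : sodTime T θ f (k+1) = some t := sodTime_succ.2 ⟨s, hkf, hn⟩
    have := (sodTime_le hT hθ hf (by omega : k+1 ≤ i+1) hsucc_f hsucc_i).1
    linarith
  have : s = s' := le_antisymm (not_lt.1 h1) (not_lt.1 h2)
  rw [this]
  exact hn'

/-- Same SOD output implies the same sampling times, with equal values there. -/
lemma timeEq (hT : 0 ≤ T) (hθ : 0 < θ) {f g : ℝ → ℝ}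
    (hf : memF T f) (hg : memF T g) (h : sodOut T θ f = sodOut T θ g) :
    ∀ k, sodTime T θ f k = sodTime T θ g k ∧
      ∀ s, sodTime T θ f k = some s → f s = g s := by
  intro k
  induction k with
  | zero =>
    refine ⟨rfl, fun s hs => ?_⟩
    simp only [sodTime, Option.some.injEq] at hs
    subst hs
    rw [hf.2, hg.2]
  | succ n ih =>
    obtain ⟨hkeq, hval⟩ := ih
    cases hfk : sodTime T θ f n with
    | none =>
      have hgk : sodTime T θ g n = none := by rw [← hkeq]; exact hfk
      constructor
      · show (sodTime T θ f n).bind _ = (sodTime T θ g n).bind _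
        rw [hfk, hgk]
        rfl
      · intro s hs
        show f s = g s
        exfalso
        have : sodTime T θ f (n+1) = none := by
          show (sodTime T θ f n).bind _ = none
          rw [hfk]; rfl
        rw [hs] at this
        exact nomatch this
    | some s =>
      have hgk : sodTime T θ g n = some s := by rw [← hkeq]; exact hfk
      have hfs : f s = g s := hval s hfk
      cases hn : sodNext T θ f s with
      | none =>
        have hng : sodNext T θ g s = none := by
          cases hng : sodNext T θ g s with
          | none => rfl
          | some u =>
            have := next_eq_of_out_eq hT hθ hg.1 hf.1 h.symm hgk hfk hng
            rw [hn] at this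
            exact nomatch this
        constructor
        · show (sodTime T θ f n).bind _ = (sodTime T θ g n).bind _
          rw [hfk, hgk]
          show sodNext T θ f s = sodNext T θ g s
          rw [hn, hng]
        · intro u hu
          exfalso
          have : sodTime T θ f (n+1) = none := by
            show (sodTime T θ f n).bind _ = none
            rw [hfk]
            show sodNext T θ f s = none
            exact hn
          rw [hu] at this
          exact nomatch this
      | some t =>
        have hng : sodNext T θ g s = some t :=
          next_eq_of_out_eq hT hθ hf.1 hg.1 h hfk hgk hn
        have hft : sodTime T θ f (n+1) = some t := sodTime_succ.2 ⟨s, hfk, hn⟩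
        have hgt : sodTime T θ g (n+1) = some t := sodTime_succ.2 ⟨s, hgk, hng⟩
        refine ⟨by rw [hft, hgt], fun u hu => ?_⟩
        rw [hft] at hu
        obtain rfl : t = u := Option.some.inj hu
        have e1 : sodOut T θ f t = f t - f s := sodOut_eq hT hθ hf.1 hfk hn
        have e2 : sodOut T θ g t = g t - g s := sodOut_eq hT hθ hg.1 hgk hng
        have : f t - f s = g t - g s := by rw [← e1, ← e2, h]
        linarith

lemma convex_lt {lam a b c : ℝ} (h0 : 0 ≤ lam) (h1 : lam ≤ 1) (ha : a < c) (hb : b < c) :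
    lam * a + (1 - lam) * b < c := by
  rcases eq_or_lt_of_le h0 with rfl | hl
  · simpa using hb
  · nlinarith [mul_pos hl (sub_pos.2 ha),
      mul_nonneg (by linarith : (0:ℝ) ≤ 1 - lam) (by linarith : 0 ≤ c - b)]

end Main

section Final

variable {T θ : ℝ}

lemma comb_bound {lam a b θ' : ℝ} (h0 : 0 ≤ lam) (h1 : lam ≤ 1)
    (ha : |a| < θ') (hb : |b| < θ') : |lam * a + (1 - lam) * b| < θ' := by
  have habs := abs_add_le (lam * a) ((1 - lam) * b)
  rw [abs_mul, abs_mul, abs_of_nonneg h0, abs_of_nonneg (by linarith : (0:ℝ) ≤ 1 - lam)] at habs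
  exact lt_of_le_of_lt habs (convex_lt h0 h1 ha hb)

lemma combTime (hT : 0 ≤ T) (hθ : 0 < θ) {f g : ℝ → ℝ}
    (hf : memF T f) (hg : memF T g) (h : sodOut T θ f = sodOut T θ g)
    {lam : ℝ} (hl0 : 0 ≤ lam) (hl1 : lam ≤ 1) :
    ∀ k, sodTime T θ (fun t => lam * f t + (1 - lam) * g t) k = sodTime T θ f k := by
  set c : ℝ → ℝ := fun t => lam * f t + (1 - lam) * g t with hc
  have hcc : ContinuousOn c (Set.Icc 0 T) :=
    (continuousOn_const.mul hf.1).add (continuousOn_const.mul hg.1)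
  intro k
  induction k with
  | zero => rfl
  | succ n ih =>
    cases hfk : sodTime T θ f n with
    | none =>
      show (sodTime T θ c n).bind _ = (sodTime T θ f n).bind _
      rw [ih, hfk]; rfl
    | some s =>
      have hgk : sodTime T θ g n = some s := by
        rw [← (timeEq hT hθ hf hg h n).1]; exact hfk
      have hfs : f s = g s := (timeEq hT hθ hf hg h n).2 s hfk
      have hms : s ∈ Set.Icc 0 T := sodTime_mem hT hθ hf.1 n s hfk
      show (sodTime T θ c n).bind _ = (sodTime T θ f n).bind _
      rw [ih, hfk]
      show sodNext T θ c s = sodNext T θ f s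
      cases hn : sodNext T θ f s with
      | none =>
        have hng : sodNext T θ g s = none := by
          cases hng : sodNext T θ g s with
          | none => rfl
          | some u =>
            have := next_eq_of_out_eq hT hθ hg.1 hf.1 h.symm hgk hfk hng
            rw [hn] at this
            exact nomatch this
        apply sodNext_none_iff.2
        intro u hu
        have h1 := sodNext_none_iff.1 hn u hu
        have h2 := sodNext_none_iff.1 hng u hu
        have hcd : c u - c s = lam * (f u - f s) + (1 - lam) * (g u - g s) := by
          simp only [hc]; ring
        rw [hcd]
        exact comb_bound hl0 hl1 h1 h2
      | some t =>
        have hng : sodNext T θ g s = some t :=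
          next_eq_of_out_eq hT hθ hf.1 hg.1 h hfk hgk hn
        have hft : sodTime T θ f (n+1) = some t := sodTime_succ.2 ⟨s, hfk, hn⟩
        have hftv : f t = g t := (timeEq hT hθ hf hg h (n+1)).2 t hft
        obtain ⟨h1f, h2f, h3f⟩ := (sodNext_some_iff hθ hf.1 hms.1).1 hn
        obtain ⟨h1g, h2g, h3g⟩ := (sodNext_some_iff hθ hg.1 hms.1).1 hng
        apply (sodNext_some_iff hθ hcc hms.1).2
        refine ⟨h1f, ?_, ?_⟩
        · have hcd : c t - c s = f t - f s := by
            simp only [hc]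
            rw [← hftv, ← hfs]; ring
          rw [hcd]; exact h2f
        · intro u hu hcu
          by_contra hut
          push_neg at hut
          have hA : |f u - f s| < θ := by
            by_contra hc'
            exact absurd (h3f u hu (not_lt.1 hc')) (not_le.2 hut)
          have hB : |g u - g s| < θ := by
            by_contra hc'
            exact absurd (h3g u hu (not_lt.1 hc')) (not_le.2 hut)
          have hcd : c u - c s = lam * (f u - f s) + (1 - lam) * (g u - g s) := by
            simp only [hc]; ring
          rw [hcd] at hcu
          have := comb_bound hl0 hl1 hA hB
          linarith

end Final


/-- convexity of SOD equivalence classes: if `Φ_θ(f) = Φ_θ(g)` then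
`Φ_θ(λf + (1−λ)g) = Φ_θ(f)` for every `λ ∈ [0,1]`. -/
theorem stmt16 (T θ : ℝ) (hT : 0 < T) (hθ : 0 < θ) (f g : ℝ → ℝ)
    (hf : memF T f) (hg : memF T g) (h : sodOut T θ f = sodOut T θ g)
    (lam : ℝ) (hl : lam ∈ Set.Icc (0:ℝ) 1) :
    sodOut T θ (fun t => lam * f t + (1 - lam) * g t) = sodOut T θ f := by
  obtain ⟨hl0, hl1⟩ := hl
  have hT0 : (0:ℝ) ≤ T := hT.le
  set c : ℝ → ℝ := fun t => lam * f t + (1 - lam) * g t with hc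
  have hcc : ContinuousOn c (Set.Icc 0 T) :=
    (continuousOn_const.mul hf.1).add (continuousOn_const.mul hg.1)
  have hct := combTime hT0 hθ hf hg h hl0 hl1
  funext t
  by_cases hex : ∃ k s, sodTime T θ f k = some s ∧ sodNext T θ f s = some t
  · obtain ⟨k, s, hk, hn⟩ := hex
    have hck : sodTime T θ c k = some s := by rw [hct k]; exact hk
    have hcn : sodNext T θ c s = some t := by
      have h2 : sodTime T θ f (k+1) = some t := sodTime_succ.2 ⟨s, hk, hn⟩
      obtain ⟨p, hp, hpn⟩ := sodTime_succ.1 (show sodTime T θ c (k+1) = some t by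
        rw [hct (k+1)]; exact h2)
      rw [hck] at hp
      obtain rfl : p = s := (Option.some.inj hp).symm
      exact hpn
    rw [sodOut_eq hT0 hθ hcc hck hcn, sodOut_eq hT0 hθ hf.1 hk hn]
    have hfs : f s = g s := (timeEq hT0 hθ hf hg h k).2 s hk
    have hft : f t = g t :=
      (timeEq hT0 hθ hf hg h (k+1)).2 t (sodTime_succ.2 ⟨s, hk, hn⟩)
    simp only [hc]
    rw [← hft, ← hfs]; ring
  · have hexc : ¬ ∃ k s, sodTime T θ c k = some s ∧ sodNext T θ c s = some t := by
      rintro ⟨k, s, hk, hn⟩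
      apply hex
      refine ⟨k, s, by rw [← hct k]; exact hk, ?_⟩
      have h1 : sodTime T θ c (k+1) = some t := sodTime_succ.2 ⟨s, hk, hn⟩
      have h2 : sodTime T θ f (k+1) = some t := by rw [← hct (k+1)]; exact h1
      obtain ⟨p, hp, hpn⟩ := sodTime_succ.1 h2
      have hk' : sodTime T θ f k = some s := by rw [← hct k]; exact hk
      rw [hk'] at hp
      obtain rfl : p = s := (Option.some.inj hp).symm
      exact hpn
    simp only [sodOut]
    rw [dif_neg hexc, dif_neg hex]
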